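/- Let n ≥ 2, ν(t) = (1, t, …, tⁿ), ν'(t) = (0, 1, 2t, …, n tⁿ⁻¹), p ∈ ℂ, c ≠ 0, and x = ν(p) + c·ν'(p). Then the C-rank of [x] with respect to the rational normal curve equals exactly n, where the C-rank is the least r such that x is a linear combination of r vectors ν(t₁), …, ν(t_r). -/

import Mathlib

open Polynomial

noncomputable def Lfun (p c : ℂ) (f : Polynomial ℂ) : ℂ :=
  f.eval p + c * f.derivative.eval p

lemma Lfun_add (p c : ℂ) (f g : Polynomial ℂ) :
    Lfun p c (f + g) = Lfun p c f + Lfun p c g := by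
  simp [Lfun]; ring

lemma Lfun_C_mul (p c r : ℂ) (f : Polynomial ℂ) :
    Lfun p c (C r * f) = r * Lfun p c f := by
  simp [Lfun]; ring

lemma Lfun_sum {ι : Type*} (p c : ℂ) (s : Finset ι) (f : ι → Polynomial ℂ) :
    Lfun p c (∑ i ∈ s, f i) = ∑ i ∈ s, Lfun p c (f i) := by
  classical
  induction s using Finset.cons_induction with
  | empty => simp [Lfun]
  | cons i s hi ih => rw [Finset.sum_cons, Finset.sum_cons, Lfun_add, ih]

lemma Lfun_X_pow (p c : ℂ) (j : ℕ) :
    Lfun p c (X ^ j : Polynomial ℂ) = p ^ j + c * (j * p ^ (j - 1)) := by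
  simp [Lfun, derivative_X_pow]

lemma rep_to_L (n : ℕ) (p c : ℂ) {r : ℕ} (t a : Fin r → ℂ)
    (hmom : ∀ j : ℕ, j ≤ n → p ^ j + c * (j * p ^ (j - 1)) = ∑ i, a i * t i ^ j)
    (f : Polynomial ℂ) (hf : f.natDegree ≤ n) :
    Lfun p c f = ∑ i, a i * f.eval (t i) := by
  have hlt : f.natDegree < n + 1 := Nat.lt_succ_of_le hf
  conv_lhs => rw [Polynomial.as_sum_range' f (n + 1) hlt]
  rw [Lfun_sum]
  have hterm : ∀ j ∈ Finset.range (n + 1),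
      Lfun p c ((monomial j) (f.coeff j)) = ∑ i, a i * (f.coeff j * t i ^ j) := by
    intro j hj
    rw [← Polynomial.C_mul_X_pow_eq_monomial, Lfun_C_mul, Lfun_X_pow,
      hmom j (Nat.lt_succ_iff.mp (Finset.mem_range.mp hj))]
    rw [Finset.mul_sum]
    apply Finset.sum_congr rfl
    intro i _
    ring
  rw [Finset.sum_congr rfl hterm, Finset.sum_comm]
  apply Finset.sum_congr rfl
  intro i _
  rw [Polynomial.eval_eq_sum_range' hlt, Finset.mul_sum]

lemma exists_nodes (n : ℕ) (hn : 2 ≤ n) (p c : ℂ) (hc : c ≠ 0) :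
    ∃ T : Finset ℂ, T.card = n ∧ Lfun p c (∏ u ∈ T, (X - C u)) = 0 := by
  classical
  -- the bad value of the parameter
  set a₁ : ℂ := n * (c * n / (n - 1)) ^ (n - 1) with ha₁def
  obtain ⟨a, ha0, ha1⟩ : ∃ a : ℂ, a ≠ 0 ∧ a ≠ a₁ := by
    by_cases h : a₁ = 1
    · exact ⟨2, by norm_num, by rw [h]; norm_num⟩
    · exact ⟨1, one_ne_zero, fun e => h e.symm⟩
  have hn1 : (n : ℂ) - 1 ≠ 0 := by
    have : (n : ℂ) ≠ 1 := by
      intro h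
      have := congrArg Complex.re h
      simp at this
      omega
    intro h
    exact this (by linear_combination h)
  have hnne : (n : ℂ) ≠ 0 := by
    intro h
    have := congrArg Complex.re h
    simp at this
    omega
  set g : Polynomial ℂ := (X - C p) ^ n - C a * (X - C p) + C (c * a) with hgdef
  have hderiv : derivative g = C (n : ℂ) * (X - C p) ^ (n - 1) - C a := by
    simp [hgdef, derivative_pow, mul_comm]
  have hevalg : ∀ y : ℂ, g.eval y = (y - p) ^ n - a * (y - p) + c * a := by
    intro y; simp [hgdef]
  have hevalg' : ∀ y : ℂ, (derivative g).eval y = n * (y - p) ^ (n - 1) - a := by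
    intro y; rw [hderiv]; simp
  -- no common roots
  have hnocommon : ∀ y : ℂ, g.eval y = 0 → (derivative g).eval y = 0 → False := by
    intro y hgy hgy'
    rw [hevalg] at hgy
    rw [hevalg'] at hgy'
    set z : ℂ := y - p with hz
    have hna : (n : ℂ) * z ^ (n - 1) = a := by linear_combination hgy'
    by_cases hz0 : z = 0
    · rw [hz0, zero_pow (by omega : n - 1 ≠ 0)] at hna
      exact ha0 (by linear_combination -hna)
    · -- z ≠ 0 : derive z = c*n/(n-1) and a = a₁
      have hzn : z ^ n = z ^ (n - 1) * z := by
        rw [← pow_succ]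
        congr 1
        omega
      -- from g(y) = 0 : z^n - a z + c a = 0;  substitute a = n z^(n-1)
      -- z^{n-1} * ((1-n) z + c n) = 0
      have hkey : z ^ (n - 1) * ((1 - n) * z + c * n) = 0 := by
        rw [← hna] at hgy
        rw [hzn] at hgy
        ring_nf at hgy ⊢
        linear_combination hgy
      have hzpow : z ^ (n - 1) ≠ 0 := pow_ne_zero _ hz0
      have hlin : (1 - (n : ℂ)) * z + c * n = 0 := by
        rcases mul_eq_zero.mp hkey with h | h
        · exact absurd h hzpow
        · exact h
      have hzval : z = c * n / (n - 1) := by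
        field_simp
        linear_combination -hlin
      exact ha1 (by rw [← hna, hzval, ha₁def])
  -- g is monic of degree n
  have hmonX : ((X - C p) ^ n : Polynomial ℂ).Monic := (monic_X_sub_C p).pow n
  have hXdeg : ((X - C p) ^ n : Polynomial ℂ).degree = (n : WithBot ℕ) := by
    rw [degree_pow, degree_X_sub_C]
    simp
  have hrestdeg : (-(C a * (X - C p)) + C (c * a) : Polynomial ℂ).degree
      < ((X - C p) ^ n : Polynomial ℂ).degree := by
    have h2 : (-(C a * (X - C p)) + C (c * a) : Polynomial ℂ).degree ≤ 1 := by
      apply le_trans (degree_add_le _ _)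
      apply max_le
      · rw [degree_neg]
        apply le_trans (degree_mul_le _ _)
        calc (C a).degree + (X - C p).degree ≤ 0 + 1 := by
              rw [degree_X_sub_C]; exact add_le_add degree_C_le le_rfl
          _ = 1 := by norm_num
      · exact le_trans degree_C_le (by norm_num)
    rw [hXdeg]
    apply lt_of_le_of_lt h2
    exact_mod_cast (by omega : 1 < n)
  have hgsplit : g = (X - C p) ^ n + (-(C a * (X - C p)) + C (c * a)) := by ring
  have hgmonic : g.Monic := by
    rw [hgsplit]
    exact hmonX.add_of_left hrestdeg
  have hgne : g ≠ 0 := hgmonic.ne_zero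
  have hgdeg : g.degree = (n : WithBot ℕ) := by
    rw [hgsplit, degree_add_eq_left_of_degree_lt hrestdeg, hXdeg]
  have hgnatdeg : g.natDegree = n := natDegree_eq_of_degree_eq_some hgdeg
  -- g is separable
  have hsep : g.Separable := by
    rw [Polynomial.separable_def]
    rw [← EuclideanDomain.gcd_isUnit_iff]
    by_contra hunit
    have hgcd0 : EuclideanDomain.gcd g (derivative g) ≠ 0 := by
      intro h
      exact hgne (EuclideanDomain.gcd_eq_zero_iff.mp h).1
    have hdegpos : 0 < (EuclideanDomain.gcd g (derivative g)).degree := by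
      by_contra hle
      push_neg at hle
      have hb := Polynomial.degree_le_zero_iff.mp hle
      set b := (EuclideanDomain.gcd g (derivative g)).coeff 0 with hbdef
      have hb0 : b ≠ 0 := by
        intro h0
        exact hgcd0 (hb.trans (by rw [h0, map_zero]))
      exact hunit (by rw [hb]; exact (Polynomial.isUnit_C).mpr hb0.isUnit)
    obtain ⟨y, hy⟩ := Complex.exists_root hdegpos
    have hyg : g.eval y = 0 :=
      Polynomial.eval_eq_zero_of_dvd_of_eval_eq_zero (EuclideanDomain.gcd_dvd_left _ _) hy
    have hyg' : (derivative g).eval y = 0 :=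
      Polynomial.eval_eq_zero_of_dvd_of_eval_eq_zero (EuclideanDomain.gcd_dvd_right _ _) hy
    exact hnocommon y hyg hyg'
  -- roots of g
  have hsplits : g.Splits := IsAlgClosed.splits g
  have hnodup : g.roots.Nodup := g.nodup_roots hsep
  have hcard : g.roots.card = n := by
    rw [Polynomial.splits_iff_card_roots.mp hsplits, hgnatdeg]
  refine ⟨g.roots.toFinset, ?_, ?_⟩
  · rw [Multiset.toFinset_card_of_nodup hnodup, hcard]
  · have hprod : ∏ u ∈ g.roots.toFinset, (X - C u) = g := by
      conv_rhs => rw [hsplits.eq_prod_roots_of_monic hgmonic]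
      rw [Finset.prod_eq_multiset_prod]
      congr 1
      rw [Multiset.toFinset_val, Multiset.dedup_eq_self.mpr hnodup]
    rw [hprod]
    -- Lfun g = c*a + c*(-a) = 0
    have h1 : g.eval p = c * a := by
      rw [hevalg]
      rw [sub_self, zero_pow (by omega : n ≠ 0)]
      ring
    have h2 : (derivative g).eval p = -a := by
      rw [hevalg']
      rw [sub_self, zero_pow (by omega : n - 1 ≠ 0)]
      ring
    simp only [Lfun, h1, h2]
    ring

lemma rep_of_nodes (n : ℕ) (p c : ℂ) (T : Finset ℂ) (hT : T.card = n)
    (hgL : Lfun p c (∏ u ∈ T, (X - C u)) = 0) (f : Polynomial ℂ) (hf : f.natDegree ≤ n) :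
    Lfun p c f = ∑ u ∈ T, Lfun p c (Lagrange.basis T id u) * f.eval u := by
  classical
  set g : Polynomial ℂ := ∏ u ∈ T, (X - C u) with hgdef
  have hmonic : g.Monic := monic_prod_of_monic _ _ fun u _ => monic_X_sub_C u
  have hgnatdeg : g.natDegree = n := by
    rw [hgdef, natDegree_prod _ _ (fun u _ => X_sub_C_ne_zero u)]
    simp [hT]
  have hgdeg : g.degree = (n : WithBot ℕ) := by
    rw [degree_eq_natDegree hmonic.ne_zero, hgnatdeg]
  have hgeval : ∀ u ∈ T, g.eval u = 0 := by
    intro u hu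
    rw [hgdef, eval_prod]
    exact Finset.prod_eq_zero hu (by simp)
  have hInj : Set.InjOn (id : ℂ → ℂ) T := Set.injOn_id _
  set I := Lagrange.interpolate T id (fun u => f.eval u) with hIdef
  have hIeval : ∀ u ∈ T, I.eval u = f.eval u := fun u hu => by
    have := Lagrange.eval_interpolate_at_node (fun u => f.eval u) hInj hu
    exact this
  have hIdeg : I.degree < (T.card : WithBot ℕ) := Lagrange.degree_interpolate_lt _ hInj
  have hIndeg : I.natDegree ≤ n :=
    natDegree_le_iff_degree_le.mpr (le_of_lt (by rw [← hT]; exact hIdeg))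
  set h : Polynomial ℂ := f - I with hhdef
  have hhdeg : h.natDegree ≤ n := le_trans (natDegree_sub_le f I) (max_le hf hIndeg)
  have hrem : h %ₘ g = 0 := by
    apply Polynomial.eq_zero_of_degree_lt_of_eval_finset_eq_zero T
    · rw [hT, ← hgdeg]
      exact degree_modByMonic_lt h hmonic
    · intro u hu
      rw [modByMonic_eq_sub_mul_div h g]
      simp only [eval_sub, eval_mul, id]
      rw [hgeval u hu]
      simp only [eval_zero, zero_mul, sub_zero, hhdef]
      rw [eval_sub, hIeval u hu, sub_self]
  have hfact : h = g * (h /ₘ g) := by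
    have := modByMonic_add_div h g
    rw [hrem, zero_add] at this
    exact this.symm
  set q := h /ₘ g with hqdef
  have hqdeg : q.natDegree = 0 := by
    rw [hqdef, natDegree_divByMonic h hmonic, hgnatdeg]
    omega
  obtain ⟨lam, hlam⟩ : ∃ lam, q = C lam := ⟨q.coeff 0, eq_C_of_natDegree_le_zero (le_of_eq hqdeg)⟩
  have hfeq : f = I + C lam * g := by
    have h2 : f = I + h := by rw [hhdef]; ring
    rw [h2, hfact, hlam]
    ring
  conv_lhs => rw [hfeq, Lfun_add, Lfun_C_mul, hgL, mul_zero, add_zero, hIdef,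
    Lagrange.interpolate_apply, Lfun_sum]
  apply Finset.sum_congr rfl
  intro u hu
  rw [Lfun_C_mul]
  ring


/-- The rank of a tangent-line point `x = ν(p) + c·ν'(p)` (with `c ≠ 0`) with respect
to the moment curve is exactly `n`: `n` is the least `r` such that `x` is a linear
combination of `r` points of the curve. -/
theorem tangent_point_rank_eq (n : ℕ) (hn : 2 ≤ n) (p c : ℂ) (hc : c ≠ 0)
    (ν : ℂ → Fin (n + 1) → ℂ) (hν : ∀ u j, ν u j = u ^ (j : ℕ))
    (ν' : ℂ → Fin (n + 1) → ℂ) (hν' : ∀ u j, ν' u j = (j : ℕ) * u ^ ((j : ℕ) - 1))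
    (x : Fin (n + 1) → ℂ) (hx : x = ν p + c • ν' p) :
    IsLeast {r : ℕ | ∃ (t : Fin r → ℂ) (a : Fin r → ℂ), x = ∑ i, a i • ν (t i)} n := by
  classical
  have hxj : ∀ j : Fin (n + 1), x j = p ^ (j : ℕ) + c * ((j : ℕ) * p ^ ((j : ℕ) - 1)) := by
    intro j
    rw [hx]
    simp [hν, hν']
  constructor
  · -- membership : x is a combination of n points of the curve
    obtain ⟨T, hTcard, hTL⟩ := exists_nodes n hn p c hc
    set aT : ℂ → ℂ := fun u => Lfun p c (Lagrange.basis T id u) with haT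
    have hmomT : ∀ j : ℕ, j ≤ n → p ^ j + c * (j * p ^ (j - 1)) = ∑ u ∈ T, aT u * u ^ j := by
      intro j hj
      have hdeg : (X ^ j : Polynomial ℂ).natDegree ≤ n := by
        simpa [Polynomial.natDegree_X_pow] using hj
      have h := rep_of_nodes n p c T hTcard hTL (X ^ j) hdeg
      rw [Lfun_X_pow] at h
      rw [h]
      apply Finset.sum_congr rfl
      intro u hu
      simp [haT]
    have e : Fin n ≃ {u // u ∈ T} := (finCongr hTcard).symm.trans T.equivFin.symm
    refine ⟨fun i => (e i : ℂ), fun i => aT (e i : ℂ), ?_⟩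
    funext j
    have hj : (j : ℕ) ≤ n := Nat.lt_succ_iff.mp j.isLt
    rw [Finset.sum_apply, hxj j, hmomT (j : ℕ) hj]
    have hsum : ∑ u ∈ T, aT u * u ^ (j : ℕ)
        = ∑ v : {u // u ∈ T}, aT (v : ℂ) * (v : ℂ) ^ (j : ℕ) := by
      rw [← Finset.sum_coe_sort]
    rw [hsum, ← Equiv.sum_comp e (fun v : {u // u ∈ T} => aT (v : ℂ) * (v : ℂ) ^ (j : ℕ))]
    apply Finset.sum_congr rfl
    intro i _
    simp [hν]
  · -- lower bound
    rintro r ⟨t, a, hrep⟩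
    by_contra hlt
    push_neg at hlt
    have hmom : ∀ j : ℕ, j ≤ n → p ^ j + c * (j * p ^ (j - 1)) = ∑ i, a i * t i ^ j := by
      intro j hj
      have h := congrFun hrep ⟨j, Nat.lt_succ_of_le hj⟩
      rw [hxj ⟨j, Nat.lt_succ_of_le hj⟩] at h
      rw [h, Finset.sum_apply]
      apply Finset.sum_congr rfl
      intro i _
      simp [hν]
    set S : Finset ℂ := (Finset.image t Finset.univ).erase p with hSdef
    set g : Polynomial ℂ := (X - Polynomial.C p) * ∏ s ∈ S, (X - Polynomial.C s) with hgdef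
    have hScard : S.card ≤ r := le_trans (Finset.card_erase_le)
      (le_trans (Finset.card_image_le) (by simp))
    have hgdeg : g.natDegree ≤ n := by
      apply le_trans (Polynomial.natDegree_mul_le)
      rw [Polynomial.natDegree_X_sub_C]
      have : (∏ s ∈ S, (X - Polynomial.C s)).natDegree ≤ S.card := by
        apply le_trans (Polynomial.natDegree_prod_le _ _)
        apply le_trans (Finset.sum_le_card_nsmul S _ 1 ?_)
        · simp
        · intro s _
          exact le_of_eq (Polynomial.natDegree_X_sub_C s)
      omega
    have hLg := rep_to_L n p c t a hmom g hgdeg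
    have hnodes : ∀ i, g.eval (t i) = 0 := by
      intro i
      by_cases h : t i = p
      · simp [hgdef, h]
      · rw [hgdef, Polynomial.eval_mul, Polynomial.eval_prod]
        have hmem : t i ∈ S := Finset.mem_erase.mpr ⟨h, Finset.mem_image.mpr ⟨i, Finset.mem_univ i, rfl⟩⟩
        rw [Finset.prod_eq_zero hmem (by simp)]
        ring
    have hrhs : ∑ i, a i * g.eval (t i) = 0 := by
      apply Finset.sum_eq_zero
      intro i _
      rw [hnodes i]
      ring
    have hlhs : Lfun p c g = c * ∏ s ∈ S, (p - s) := by
      have hd : Polynomial.derivative g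
          = ∏ s ∈ S, (X - Polynomial.C s)
            + (X - Polynomial.C p) * Polynomial.derivative (∏ s ∈ S, (X - Polynomial.C s)) := by
        rw [hgdef, Polynomial.derivative_mul]
        simp
      rw [Lfun, hd]
      rw [hgdef]
      simp [Polynomial.eval_prod]
    rw [hlhs, hrhs] at hLg
    have hprod : ∏ s ∈ S, (p - s) ≠ 0 := by
      rw [Finset.prod_ne_zero_iff]
      intro s hs
      have := (Finset.mem_erase.mp hs).1
      intro h
      exact this (by linear_combination -h)
    exact (mul_ne_zero hc hprod) hLg
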